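/- Let Q be a non-degenerate quadratic form of signature (p, n−p) with p ∈ {0, 1} on an n-dimensional real vector space Λ, and define Q̄ on Λ̄ = Λ ⊕ ℝ by Q̄(v, α) = Q(v) + α². Then any ℝ-linear map Z : Λ → ℂ whose kernel is Q-negative definite extends to an ℝ-linear map Z̄ : Λ̄ → ℂ whose kernel is Q̄-negative definite. -/

import Mathlib

/-- Let `Q` be a non-degenerate quadratic form of signature `(p, n−p)` with
`p ∈ {0, 1}` on an `n`-dimensional real vector space `Λ` (so a maximal positive definite
subspace has dimension `p`), and define `Q̄` on `Λ̄ = Λ ⊕ ℝ` by `Q̄(v, α) = Q(v) + α²`.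
Then any `ℝ`-linear map `Z : Λ → ℂ` whose kernel is `Q`-negative definite extends to an
`ℝ`-linear map `Z̄ : Λ̄ → ℂ` whose kernel is `Q̄`-negative definite. -/
theorem stmt7 {Λ : Type*} [AddCommGroup Λ] [Module ℝ Λ] [FiniteDimensional ℝ Λ]
    (Q : QuadraticForm ℝ Λ) (p : ℕ) (hp : p = 0 ∨ p = 1)
    (hnd : Q.polarBilin.Nondegenerate)
    (hposmax : ∀ W : Submodule ℝ Λ, (∀ w ∈ W, w ≠ 0 → 0 < Q w) →
      Module.finrank ℝ W ≤ p)
    (hposex : ∃ W : Submodule ℝ Λ, Module.finrank ℝ W = p ∧ ∀ w ∈ W, w ≠ 0 → 0 < Q w)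
    (Qbar : QuadraticForm ℝ (Λ × ℝ))
    (hQbar : ∀ (v : Λ) (α : ℝ), Qbar (v, α) = Q v + α ^ 2)
    (Z : Λ →ₗ[ℝ] ℂ) (hker : ∀ v ∈ LinearMap.ker Z, v ≠ 0 → Q v < 0) :
    ∃ Zbar : (Λ × ℝ) →ₗ[ℝ] ℂ, (∀ v : Λ, Zbar (v, 0) = Z v) ∧
      ∀ x ∈ LinearMap.ker Zbar, x ≠ 0 → Qbar x < 0 := by
  -- Key step: find `z : ℂ` such that any relation `Z v + α • z = 0` forces `Q v + α² < 0`.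
  have key : ∃ z : ℂ, ∀ (v : Λ) (α : ℝ), Z v + α • z = 0 → ¬(v = 0 ∧ α = 0) →
      Q v + α ^ 2 < 0 := by
    by_cases hsurj : LinearMap.range Z = ⊤
    · -- Z is surjective.  Let K = ker Z; find a negative vector orthogonal to K.
      set K := LinearMap.ker Z with hK
      have hrefl : Q.polarBilin.IsRefl := fun x y h => by
        simpa [QuadraticMap.polar_comm Q y x] using h
      have hrestr : (LinearMap.BilinForm.restrict Q.polarBilin K).Nondegenerate := by
        constructor
        all_goals
          rintro ⟨w, hw⟩ h
          have h0 := h ⟨w, hw⟩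
          simp only [LinearMap.BilinForm.restrict_apply, LinearMap.domRestrict_apply, QuadraticMap.polarBilin_apply_apply,
            QuadraticMap.polar_self, nsmul_eq_mul] at h0
          push_cast at h0
          by_contra hne
          have hwne : w ≠ 0 := by simpa [Subtype.ext_iff] using hne
          have := hker w hw hwne
          nlinarith
      have hcompl : IsCompl K (LinearMap.BilinForm.orthogonal Q.polarBilin K) :=
        LinearMap.BilinForm.isCompl_orthogonal_of_restrict_nondegenerate (B := Q.polarBilin) hrefl hrestr
      -- there exists u in the orthogonal complement with Q u < 0
      have hexu : ∃ u ∈ LinearMap.BilinForm.orthogonal Q.polarBilin K, Q u < 0 := by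
        by_contra hno
        push_neg at hno
        -- then Q is positive definite on K^⊥
        have hposdef : ∀ u ∈ LinearMap.BilinForm.orthogonal Q.polarBilin K, u ≠ 0 → 0 < Q u := by
          intro u hu hune
          rcases lt_or_eq_of_le (hno u hu) with h | h
          · exact h
          -- Q u = 0 : show polar Q u ⬝ = 0, contradicting nondegeneracy
          exfalso
          apply hune
          apply hnd.1 u
          intro x
          have hx : x ∈ K ⊔ LinearMap.BilinForm.orthogonal Q.polarBilin K := by
            rw [hcompl.sup_eq_top]; trivial
        -- decompose x = k + w
          obtain ⟨k, hk, w, hw, rfl⟩ := Submodule.mem_sup.mp hx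
          have h1 : QuadraticMap.polar Q u k = 0 := by
            have := hu k hk
            simpa [QuadraticMap.polar_comm Q u k] using this
          -- show polar Q u w = 0 via positive semidefiniteness on K^⊥
          have h2 : QuadraticMap.polar Q u w = 0 := by
            set c : ℝ := QuadraticMap.polar Q u w with hc
            set d : ℝ := Q w with hd
            have hd0 : 0 ≤ d := hno w hw
            set t : ℝ := -c / (d + 1) with ht
            have hmem : u + t • w ∈ LinearMap.BilinForm.orthogonal Q.polarBilin K :=
              Submodule.add_mem _ hu (Submodule.smul_mem _ _ hw)
            have hQ : 0 ≤ Q (u + t • w) := hno _ hmem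
            have hexp : Q (u + t • w) = Q u + t * t * d + t * c := by
              have := QuadraticMap.polar Q u (t • w)
              have hpol : QuadraticMap.polar Q u (t • w) = t * c := by
                rw [hc]
                simpa using QuadraticMap.polar_smul_right Q t u w
              have : Q (u + t • w) = Q u + Q (t • w) + QuadraticMap.polar Q u (t • w) := by
                rw [QuadraticMap.polar]; ring
              rw [this, hpol, QuadraticMap.map_smul, hd]
              simp only [smul_eq_mul]; try ring
            rw [hexp, ← h, zero_add] at hQ
            -- 0 ≤ t² d + t c with t = -c/(d+1) forces c = 0
            by_contra hcne
            have hden : 0 < d + 1 := by linarith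
            have : t = -c / (d + 1) := ht
            have hval : t * t * d + t * c = -c ^ 2 / (d + 1) ^ 2 := by
              rw [ht]
              field_simp
              ring
            rw [hval] at hQ
            have : 0 < c ^ 2 := by positivity
            have : 0 < c ^ 2 / (d + 1) ^ 2 := by positivity
            rw [neg_div] at hQ
            linarith
          have : QuadraticMap.polar Q u (k + w) = 0 := by
            rw [QuadraticMap.polar_add_right, h1, h2]; ring
          simpa [QuadraticMap.polarBilin_apply_apply] using this
        -- dimension count contradiction
        have hdim := hposmax _ hposdef
        have hrank := LinearMap.finrank_range_add_finrank_ker Z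
        rw [hsurj] at hrank
        have htop : Module.finrank ℝ (⊤ : Submodule ℝ ℂ) = 2 := by
          rw [finrank_top]; exact Complex.finrank_real_complex
        rw [htop] at hrank
        rw [← hK] at hrank
        have hsum := Submodule.finrank_add_eq_of_isCompl hcompl
        have hple : p ≤ 1 := by rcases hp with h | h <;> omega
        omega
      obtain ⟨u, hu, hQu⟩ := hexu
      -- rescale so that Q u' = -2
      set c : ℝ := Real.sqrt (2 / (-Q u)) with hcdef
      have hneg : (0:ℝ) < -Q u := by linarith
      have hcsq : c * c = 2 / (-Q u) := by
        rw [hcdef]; exact Real.mul_self_sqrt (by positivity)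
      set u' : Λ := c • u with hu'def
      have hu' : u' ∈ LinearMap.BilinForm.orthogonal Q.polarBilin K := Submodule.smul_mem _ _ hu
      have hQu' : Q u' = -2 := by
        rw [hu'def, QuadraticMap.map_smul, hcsq]
        have h0 : -Q u ≠ 0 := ne_of_gt hneg
        field_simp
        try ring
        rw [mul_inv_cancel₀ (by linarith : Q u ≠ 0)]; ring
      refine ⟨Z u', ?_⟩
      intro v α h hne
      have hw : v + α • u' ∈ K := by
        simp only [hK, LinearMap.mem_ker, map_add, map_smul]
        exact h
      set w : Λ := v + α • u' with hwdef
      have hpol : QuadraticMap.polar Q w u' = 0 := by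
        have := hu' w hw
        rwa [QuadraticMap.polarBilin_apply_apply] at this
      have hv : Q v = Q w + α * α * Q u' - α * QuadraticMap.polar Q w u' := by
        have hveq : v = w + (-α) • u' := by rw [hwdef]; abel_nf; simp [neg_smul]; try abel
        rw [hveq]
        have : Q (w + (-α) • u') = Q w + Q ((-α) • u') + QuadraticMap.polar Q w ((-α) • u') := by
          rw [QuadraticMap.polar]; ring
        rw [this, QuadraticMap.map_smul]
        have : QuadraticMap.polar Q w ((-α) • u') = (-α) * QuadraticMap.polar Q w u' := by
          simpa using QuadraticMap.polar_smul_right Q (-α) w u'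
        rw [this]; simp only [smul_eq_mul]; try ring
      rw [hv, hpol, hQu']
      by_cases hα : α = 0
      · subst hα
        have hvw : w = v := by rw [hwdef]; simp
        have hvne : v ≠ 0 := fun h0 => hne ⟨h0, rfl⟩
        have := hker v (hvw ▸ hw) hvne
        have hQv : Q w < 0 := by rwa [hvw]
        nlinarith
      · have hQw : Q w ≤ 0 := by
          by_cases hw0 : w = 0
          · simp [hw0]
          · exact le_of_lt (hker w hw hw0)
        nlinarith [sq_nonneg α, mul_self_pos.mpr hα]
    · -- Z not surjective: pick z outside the range.
      have : ∃ z : ℂ, z ∉ LinearMap.range Z := by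
        by_contra hall
        push_neg at hall
        exact hsurj (Submodule.eq_top_iff'.mpr hall)
      obtain ⟨z, hz⟩ := this
      refine ⟨z, ?_⟩
      intro v α h hne
      by_cases hα : α = 0
      · subst hα
        simp only [zero_smul, add_zero] at h
        have hvne : v ≠ 0 := fun h0 => hne ⟨h0, rfl⟩
        have := hker v (LinearMap.mem_ker.mpr h) hvne
        nlinarith
      · exfalso
        apply hz
        refine ⟨(-α⁻¹) • v, ?_⟩
        rw [map_smul]
        have : Z v = -(α • z) := by linear_combination h
        rw [this]
        simp [smul_smul, hα]
  obtain ⟨z, hz⟩ := key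
  refine ⟨Z.comp (LinearMap.fst ℝ Λ ℝ) + (LinearMap.snd ℝ Λ ℝ).smulRight z, ?_, ?_⟩
  · intro v; simp
  · rintro ⟨v, α⟩ hx hne
    simp only [LinearMap.mem_ker, LinearMap.add_apply, LinearMap.coe_comp, Function.comp_apply,
      LinearMap.fst_apply, LinearMap.smulRight_apply, LinearMap.snd_apply] at hx
    have := hz v α hx (by
      intro ⟨h1, h2⟩
      exact hne (by simp [h1, h2, Prod.ext_iff]))
    rw [hQbar]
    exact this
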